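/- Let n ≥ 2 and let Rm be a 4-tensor on ℝⁿ (components Rm_{ijkl}, indices in {1,…,n}) satisfying Rm_{ijkl} = −Rm_{jikl} = −Rm_{ijlk} and Rm_{ijkl} = Rm_{klij}. Suppose Rm has nonnegative sectional curvature in the sense that Σ_{i,j,k,l} Rm_{ijkl} u_i v_j u_k v_l ≥ 0 for all vectors u, v ∈ ℝⁿ. Define the Ricci contraction Ric_{jl} := Σ_i Rm_{ijil}. Then Σ_{i,j,k} Ric_{ij} Ric_{ik} Ric_{jk} ≥ Σ_{i,j,k,l} Rm_{ijkl} Ric_{ik} Ric_{jl}. -/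

import Mathlib

open Finset

private lemma sum_swap3 {M ι : Type*} [AddCommMonoid M] [Fintype ι] (f : ι → ι → ι → M) :
    ∑ i, ∑ j, ∑ a, f i j a = ∑ a, ∑ i, ∑ j, f i j a := by
  have h : ∀ i, (∑ j, ∑ a, f i j a) = ∑ a, ∑ j, f i j a := fun i => Finset.sum_comm
  simp_rw [h]
  exact Finset.sum_comm

private lemma sum_swap4 {M ι : Type*} [AddCommMonoid M] [Fintype ι] (f : ι → ι → ι → ι → M) :
    ∑ i, ∑ j, ∑ k, ∑ a, f i j k a = ∑ a, ∑ i, ∑ j, ∑ k, f i j k a := by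
  have h : ∀ i, (∑ j, ∑ k, ∑ a, f i j k a) = ∑ a, ∑ j, ∑ k, f i j k a :=
    fun i => sum_swap3 _
  simp_rw [h]
  exact Finset.sum_comm

private lemma sum_swap5 {M ι : Type*} [AddCommMonoid M] [Fintype ι]
    (f : ι → ι → ι → ι → ι → M) :
    ∑ i, ∑ j, ∑ k, ∑ l, ∑ a, f i j k l a = ∑ a, ∑ i, ∑ j, ∑ k, ∑ l, f i j k l a := by
  have h : ∀ i, (∑ j, ∑ k, ∑ l, ∑ a, f i j k l a) = ∑ a, ∑ j, ∑ k, ∑ l, f i j k l a :=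
    fun i => sum_swap4 _
  simp_rw [h]
  exact Finset.sum_comm

private lemma sum_swap42 {M ι : Type*} [AddCommMonoid M] [Fintype ι]
    (f : ι → ι → ι → ι → ι → ι → M) :
    ∑ i, ∑ j, ∑ k, ∑ l, ∑ a, ∑ b, f i j k l a b
      = ∑ a, ∑ b, ∑ i, ∑ j, ∑ k, ∑ l, f i j k l a b :=
  (sum_swap5 _).trans <| Finset.sum_congr rfl fun a _ => sum_swap5 _

theorem cpe_ricci_cubic_estimate (n : ℕ) (hn : 2 ≤ n)
    (Rm : Fin n → Fin n → Fin n → Fin n → ℝ)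
    (hanti1 : ∀ i j k l, Rm i j k l = -Rm j i k l)
    (hanti2 : ∀ i j k l, Rm i j k l = -Rm i j l k)
    (hpair : ∀ i j k l, Rm i j k l = Rm k l i j)
    (hsec : ∀ u v : Fin n → ℝ,
      0 ≤ ∑ i, ∑ j, ∑ k, ∑ l, Rm i j k l * u i * v j * u k * v l) :
    (∑ i, ∑ j, ∑ k, ∑ l,
        Rm i j k l * (∑ p, Rm p i p k) * (∑ p, Rm p j p l)) ≤
      ∑ i, ∑ j, ∑ k,
        (∑ p, Rm p i p j) * (∑ p, Rm p i p k) * (∑ p, Rm p j p k) := by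
  classical
  set A : Matrix (Fin n) (Fin n) ℝ := Matrix.of fun i j => ∑ p, Rm p i p j with hAdef
  have hAapp : ∀ i j, A i j = ∑ p, Rm p i p j := fun i j => rfl
  have hAsymm : ∀ i j, A i j = A j i := by
    intro i j
    simp only [hAapp]
    exact Finset.sum_congr rfl fun p _ => hpair p i p j
  have hA : A.IsHermitian := by
    ext i j
    simpa using (hAsymm j i)
  set U : Matrix (Fin n) (Fin n) ℝ := (hA.eigenvectorUnitary : Matrix (Fin n) (Fin n) ℝ)
    with hUdef
  set lam : Fin n → ℝ := hA.eigenvalues with hlam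
  have hAe : ∀ i j, A i j = ∑ a, lam a * U i a * U j a := by
    intro i j
    conv_lhs => rw [hA.spectral_theorem]
    simp [Matrix.mul_apply, Matrix.diagonal, Finset.sum_mul, Matrix.star_apply]
    refine Finset.sum_congr rfl fun a _ => ?_
    simp only [hUdef, hlam, Matrix.IsHermitian.eigenvectorUnitary_apply]
    ring
  have hU1 : ∀ a b, (∑ i, U i a * U i b) = if a = b then 1 else 0 := by
    intro a b
    have := congrFun (congrFun (Unitary.coe_star_mul_self hA.eigenvectorUnitary) a) b
    simp [Matrix.mul_apply, Matrix.star_apply, Matrix.one_apply] at this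
    simpa [hUdef] using this
  have hU2 : ∀ i j, (∑ a, U i a * U j a) = if i = j then 1 else 0 := by
    intro i j
    have := congrFun (congrFun (Unitary.coe_mul_star_self hA.eigenvectorUnitary) i) j
    simp [Matrix.mul_apply, Matrix.star_apply, Matrix.one_apply] at this
    simpa [hUdef] using this
  have hA' : ∀ i k, (∑ j, Rm i j k j) = A i k := by
    intro i k
    rw [hAapp]
    refine Finset.sum_congr rfl fun j _ => ?_
    rw [hanti1 i j k j, hanti2 j i k j, hpair j i j k]
    ring
  set K : Fin n → Fin n → ℝ :=
    fun a b => ∑ i, ∑ j, ∑ k, ∑ l, Rm i j k l * U i a * U j b * U k a * U l b with hKdef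
  have hK0 : ∀ a b, 0 ≤ K a b := by
    intro a b
    simpa [hKdef] using hsec (fun i => U i a) (fun j => U j b)
  have hKsymm : ∀ a b, K a b = K b a := by
    intro a b
    simp only [hKdef]
    calc (∑ i, ∑ j, ∑ k, ∑ l, Rm i j k l * U i a * U j b * U k a * U l b)
        = ∑ i, ∑ j, ∑ k, ∑ l, Rm j i l k * U j b * U i a * U l b * U k a := by
          refine Finset.sum_congr rfl fun i _ => Finset.sum_congr rfl fun j _ =>
            Finset.sum_congr rfl fun k _ => Finset.sum_congr rfl fun l _ => ?_
          rw [hanti1 j i l k, hanti2 i j l k]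
          ring
      _ = ∑ j, ∑ i, ∑ k, ∑ l, Rm j i l k * U j b * U i a * U l b * U k a := Finset.sum_comm
      _ = ∑ j, ∑ i, ∑ l, ∑ k, Rm j i l k * U j b * U i a * U l b * U k a :=
          Finset.sum_congr rfl fun j _ => Finset.sum_congr rfl fun i _ => Finset.sum_comm
  have hKsum : ∀ a, (∑ b, K a b) = lam a := by
    intro a
    calc (∑ b, K a b)
        = ∑ b, ∑ i, ∑ j, ∑ k, ∑ l, Rm i j k l * U i a * U j b * U k a * U l b := by
          simp only [hKdef]
      _ = ∑ i, ∑ j, ∑ k, ∑ l, ∑ b, Rm i j k l * U i a * U j b * U k a * U l b :=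
          (sum_swap5 _).symm
      _ = ∑ i, ∑ j, ∑ k, ∑ l, (Rm i j k l * U i a * U k a) * (if j = l then 1 else 0) := by
          refine Finset.sum_congr rfl fun i _ => Finset.sum_congr rfl fun j _ =>
            Finset.sum_congr rfl fun k _ => Finset.sum_congr rfl fun l _ => ?_
          rw [← hU2 j l, Finset.mul_sum]
          exact Finset.sum_congr rfl fun b _ => by ring
      _ = ∑ i, ∑ j, ∑ k, Rm i j k j * U i a * U k a := by
          refine Finset.sum_congr rfl fun i _ => Finset.sum_congr rfl fun j _ =>
            Finset.sum_congr rfl fun k _ => ?_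
          simp [mul_ite, mul_one, mul_zero, Finset.sum_ite_eq]
      _ = ∑ i, ∑ k, (∑ j, Rm i j k j) * (U i a * U k a) := by
          refine Finset.sum_congr rfl fun i _ => ?_
          rw [Finset.sum_comm]
          refine Finset.sum_congr rfl fun k _ => ?_
          rw [Finset.sum_mul]
          exact Finset.sum_congr rfl fun j _ => by ring
      _ = ∑ i, ∑ k, (∑ c, lam c * U i c * U k c) * (U i a * U k a) := by
          refine Finset.sum_congr rfl fun i _ => Finset.sum_congr rfl fun k _ => by
            rw [hA', hAe]
      _ = ∑ i, ∑ k, ∑ c, lam c * U i c * U k c * (U i a * U k a) := by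
          refine Finset.sum_congr rfl fun i _ => Finset.sum_congr rfl fun k _ =>
            Finset.sum_mul _ _ _
      _ = ∑ c, ∑ i, ∑ k, lam c * U i c * U k c * (U i a * U k a) := sum_swap3 _
      _ = ∑ c, ((if a = c then 1 else 0) * (if a = c then 1 else 0)) * lam c := by
          refine Finset.sum_congr rfl fun c _ => ?_
          rw [← hU1 a c, Finset.sum_mul_sum, Finset.sum_mul]
          simp_rw [Finset.sum_mul]
          exact Finset.sum_congr rfl fun i _ => Finset.sum_congr rfl fun k _ => by ring
      _ = lam a := by simp
  have E1 : (∑ i, ∑ j, ∑ k, ∑ l, Rm i j k l * A i k * A j l)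
      = ∑ a, ∑ b, lam a * lam b * K a b := by
    calc (∑ i, ∑ j, ∑ k, ∑ l, Rm i j k l * A i k * A j l)
        = ∑ i, ∑ j, ∑ k, ∑ l, ∑ a, ∑ b,
            lam a * lam b * (Rm i j k l * U i a * U j b * U k a * U l b) := by
          refine Finset.sum_congr rfl fun i _ => Finset.sum_congr rfl fun j _ =>
            Finset.sum_congr rfl fun k _ => Finset.sum_congr rfl fun l _ => ?_
          rw [hAe i k, hAe j l]
          simp_rw [Finset.mul_sum, Finset.sum_mul]
          rw [Finset.sum_comm]
          exact Finset.sum_congr rfl fun x _ => Finset.sum_congr rfl fun y _ => by ring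
      _ = ∑ a, ∑ b, ∑ i, ∑ j, ∑ k, ∑ l,
            lam a * lam b * (Rm i j k l * U i a * U j b * U k a * U l b) := sum_swap42 _
      _ = ∑ a, ∑ b, lam a * lam b * K a b := by
          refine Finset.sum_congr rfl fun a _ => Finset.sum_congr rfl fun b _ => ?_
          simp only [hKdef]
          simp_rw [Finset.mul_sum]

  have E2 : (∑ i, ∑ j, ∑ k, A i j * A i k * A j k) = ∑ a, lam a ^ 3 := by
    have hbridge : (∑ i, ∑ j, ∑ k, A i j * A i k * A j k) = (A * A * A).trace := by
      simp only [Matrix.trace, Matrix.diag, Matrix.mul_apply, Finset.sum_mul]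
      refine Finset.sum_congr rfl fun i _ => Finset.sum_congr rfl fun j _ =>
        Finset.sum_congr rfl fun k _ => ?_
      rw [hAsymm i j, hAsymm i k, hAsymm j k]
      ring
    rw [hbridge]
    have hs : (star U) * U = 1 := by
      have h := Unitary.coe_star_mul_self hA.eigenvectorUnitary
      simpa [hUdef] using h
    have hsv : ∀ X : Matrix (Fin n) (Fin n) ℝ, (star U) * (U * X) = X := by
      intro X; rw [← Matrix.mul_assoc, hs, Matrix.one_mul]
    set d : Matrix (Fin n) (Fin n) ℝ :=
      Matrix.diagonal ((RCLike.ofReal : ℝ → ℝ) ∘ hA.eigenvalues) with hd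
    have hspec : A = U * d * (star U) := by
      rw [hUdef, hd]; exact hA.spectral_theorem
    have h3 : A * A * A = U * (d * d * d) * (star U) := by
      rw [hspec]
      simp only [Matrix.mul_assoc]
      simp_rw [hsv]
    rw [h3, ← Matrix.mul_assoc, Matrix.trace_mul_comm, ← Matrix.mul_assoc, hsv, hd,
      Matrix.diagonal_mul_diagonal, Matrix.diagonal_mul_diagonal, Matrix.trace_diagonal]
    refine Finset.sum_congr rfl fun a _ => ?_
    simp [hlam]
    ring
  have goalL : (∑ i, ∑ j, ∑ k, ∑ l,
      Rm i j k l * (∑ p, Rm p i p k) * (∑ p, Rm p j p l))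
      = ∑ a, ∑ b, lam a * lam b * K a b := by
    rw [← E1]; rfl
  have goalR : (∑ i, ∑ j, ∑ k,
      (∑ p, Rm p i p j) * (∑ p, Rm p i p k) * (∑ p, Rm p j p k))
      = ∑ a, ∑ b, lam a ^ 2 * K a b := by
    have h : (∑ i, ∑ j, ∑ k,
        (∑ p, Rm p i p j) * (∑ p, Rm p i p k) * (∑ p, Rm p j p k))
        = ∑ a, lam a ^ 3 := E2
    rw [h]
    refine Finset.sum_congr rfl fun a _ => ?_
    rw [← Finset.mul_sum, hKsum a]
    ring
  rw [goalL, goalR]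
  have symmEq : (∑ a, ∑ b, lam b ^ 2 * K a b) = ∑ a, ∑ b, lam a ^ 2 * K a b := by
    rw [Finset.sum_comm]
    exact Finset.sum_congr rfl fun a _ => Finset.sum_congr rfl fun b _ => by
      rw [hKsymm b a]
  have key : 0 ≤ ∑ a, ∑ b, (lam a - lam b) ^ 2 * K a b :=
    Finset.sum_nonneg fun a _ => Finset.sum_nonneg fun b _ =>
      mul_nonneg (sq_nonneg _) (hK0 a b)
  have expand : (∑ a, ∑ b, (lam a - lam b) ^ 2 * K a b)
      = (∑ a, ∑ b, lam a ^ 2 * K a b) + (∑ a, ∑ b, lam b ^ 2 * K a b)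
        - 2 * (∑ a, ∑ b, lam a * lam b * K a b) := by
    simp_rw [Finset.mul_sum, ← Finset.sum_add_distrib, ← Finset.sum_sub_distrib]
    refine Finset.sum_congr rfl fun a _ => Finset.sum_congr rfl fun b _ => by ring
  rw [symmEq] at expand
  linarith
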